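/- arXiv:0711.1897 — 2 statements merged into one kernel-verified Lean document; each statement's English description precedes it below -/
import Mathlib

section
/- Let η ≥ −1/2 be real, let α and β be complex numbers with Re α > 0 and Re β > 0, and let φ : (0,∞) → ℝ be continuous with compact support contained in (0,∞). Then for every t > 0, (I^β_{η+α}(I^α_η φ))(t) = (I^{α+β}_η φ)(t), i.e., (2 t^{−2(β+η+α)}/Γ(β)) ∫_0^t (t² − r²)^{β−1} r^{2(η+α)+1} (I^α_η φ)(r) dr = (2 t^{−2(α+β+η)}/Γ(α+β)) ∫_0^t (t² − r²)^{α+β−1} r^{2η+1} φ(r) dr. -/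
open MeasureTheory

/-- The Erdélyi–Kober fractional integral `(I^α_μ φ)(t)` with complex order `α`
(`Re α > 0`), complex parameter `μ`, for a complex-valued function `φ` on `(0,∞)`. -/
noncomputable def EK (α μ : ℂ) (φ : ℝ → ℂ) (t : ℝ) : ℂ :=
  (2 * (t : ℂ) ^ (-2 * (α + μ)) / Complex.Gamma α) *
    ∫ r in (0 : ℝ)..t,
      (((t ^ 2 - r ^ 2 : ℝ)) : ℂ) ^ (α - 1) * (r : ℂ) ^ (2 * μ + 1) * φ r

namespace EKaux

open Set intervalIntegral

lemma contOn_cpow {A : Set ℝ} {g : ℝ → ℝ} (hg : ContinuousOn g A)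
    (hpos : ∀ x ∈ A, 0 < g x) (c : ℂ) :
    ContinuousOn (fun x => ((g x : ℝ) : ℂ) ^ c) A := fun x hx =>
  ((continuousAt_cpow_const (Complex.ofReal_mem_slitPlane.2 (hpos x hx))).comp
    Complex.continuous_ofReal.continuousAt).comp_continuousWithinAt (hg x hx)

lemma II_left {c : ℂ} (hc : 0 < c.re) (p q : ℝ) :
    IntervalIntegrable (fun x => ((x - p : ℝ) : ℂ) ^ (c - 1)) volume p q := by
  have h : IntervalIntegrable (fun y : ℝ => (y : ℂ) ^ (c - 1)) volume 0 (q - p) :=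
    intervalIntegrable_cpow' (by simpa using hc)
  simpa using h.comp_sub_right p

lemma II_right {c : ℂ} (hc : 0 < c.re) (p q : ℝ) :
    IntervalIntegrable (fun x => ((q - x : ℝ) : ℂ) ^ (c - 1)) volume p q := by
  have h : IntervalIntegrable (fun y : ℝ => (y : ℂ) ^ (c - 1)) volume 0 (q - p) :=
    intervalIntegrable_cpow' (by simpa using hc)
  have := h.comp_sub_left q
  simpa using this.symm

lemma II_both {u v : ℂ} (hu : 0 < u.re) (hv : 0 < v.re) {p q : ℝ} (hpq : p < q) :
    IntervalIntegrable
      (fun x => ((x - p : ℝ) : ℂ) ^ (u - 1) * ((q - x : ℝ) : ℂ) ^ (v - 1)) volume p q := by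
  set m := (p + q) / 2 with hm
  have hpm : p < m := by simp only [hm]; linarith
  have hmq : m < q := by simp only [hm]; linarith
  have h1 : IntervalIntegrable
      (fun x => ((x - p : ℝ) : ℂ) ^ (u - 1) * ((q - x : ℝ) : ℂ) ^ (v - 1)) volume p m := by
    apply (II_left hu p m).mul_continuousOn
    apply contOn_cpow (by fun_prop)
    intro x hx
    rw [uIcc_of_le hpm.le] at hx
    linarith [hx.2]
  have h2 : IntervalIntegrable
      (fun x => ((x - p : ℝ) : ℂ) ^ (u - 1) * ((q - x : ℝ) : ℂ) ^ (v - 1)) volume m q := by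
    apply (II_right hv m q).continuousOn_mul
    apply contOn_cpow (by fun_prop)
    intro x hx
    rw [uIcc_of_le hmq.le] at hx
    linarith [hx.1]
  exact h1.trans h2

lemma integral_shifted_beta (u v : ℂ) {p q : ℝ} (hpq : p < q) :
    ∫ x in p..q, ((x - p : ℝ) : ℂ) ^ (u - 1) * ((q - x : ℝ) : ℂ) ^ (v - 1)
      = ((q - p : ℝ) : ℂ) ^ (u + v - 1) * Complex.betaIntegral u v := by
  have key := Complex.betaIntegral_scaled u v (a := q - p) (by linarith)
  calc ∫ x in p..q, ((x - p : ℝ) : ℂ) ^ (u - 1) * ((q - x : ℝ) : ℂ) ^ (v - 1)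
      = ∫ x in p..q, (fun y : ℝ => (y : ℂ) ^ (u - 1) * (((q - p : ℝ) : ℂ) - (y : ℂ)) ^ (v - 1)) (x - p) := by
        apply intervalIntegral.integral_congr
        intro x _
        simp only
        congr 2
        push_cast; ring
    _ = ∫ y in (p - p)..(q - p), (y : ℂ) ^ (u - 1) * (((q - p : ℝ) : ℂ) - (y : ℂ)) ^ (v - 1) :=
        intervalIntegral.integral_comp_sub_right (fun y : ℝ => (y : ℂ) ^ (u - 1) * (((q - p : ℝ) : ℂ) - (y : ℂ)) ^ (v - 1)) p
    _ = ((q - p : ℝ) : ℂ) ^ (u + v - 1) * Complex.betaIntegral u v := by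
        rw [sub_self]; exact_mod_cast key

lemma sq_image_Ioo {s t : ℝ} (hs : 0 ≤ s) (hst : s < t) :
    (fun x : ℝ => x ^ 2) '' Ioo s t = Ioo (s ^ 2) (t ^ 2) := by
  ext y
  simp only [mem_image, mem_Ioo]
  constructor
  · rintro ⟨x, ⟨h1, h2⟩, rfl⟩
    exact ⟨pow_lt_pow_left₀ h1 hs two_ne_zero, pow_lt_pow_left₀ h2 (hs.trans h1.le) two_ne_zero⟩
  · rintro ⟨h1, h2⟩
    have hy : 0 ≤ y := le_trans (sq_nonneg s) h1.le
    refine ⟨Real.sqrt y, ⟨?_, ?_⟩, Real.sq_sqrt hy⟩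
    · have := Real.sqrt_lt_sqrt (sq_nonneg s) h1
      rwa [Real.sqrt_sq hs] at this
    · have := Real.sqrt_lt_sqrt hy h2
      rwa [Real.sqrt_sq (hs.trans hst.le)] at this

lemma stepC {u v : ℂ} (hu : 0 < u.re) (hv : 0 < v.re) {s t : ℝ} (hs : 0 ≤ s) (hst : s < t) :
    IntegrableOn (fun r => ((r ^ 2 - s ^ 2 : ℝ) : ℂ) ^ (u - 1) * ((t ^ 2 - r ^ 2 : ℝ) : ℂ) ^ (v - 1)
        * ((2 * r : ℝ) : ℂ)) (Ioo s t) volume ∧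
    ∫ r in Ioo s t, ((r ^ 2 - s ^ 2 : ℝ) : ℂ) ^ (u - 1) * ((t ^ 2 - r ^ 2 : ℝ) : ℂ) ^ (v - 1)
        * ((2 * r : ℝ) : ℂ)
      = ((t ^ 2 - s ^ 2 : ℝ) : ℂ) ^ (u + v - 1) * Complex.betaIntegral u v := by
  have hpq : s ^ 2 < t ^ 2 := pow_lt_pow_left₀ hst hs two_ne_zero
  set g : ℝ → ℂ := fun x => ((x - s ^ 2 : ℝ) : ℂ) ^ (u - 1) * ((t ^ 2 - x : ℝ) : ℂ) ^ (v - 1) with hg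
  have hmeas : MeasurableSet (Ioo s t) := measurableSet_Ioo
  have hder : ∀ x ∈ Ioo s t, HasDerivWithinAt (fun y : ℝ => y ^ 2) (2 * x) (Ioo s t) x := by
    intro x _
    simpa using (hasDerivAt_pow 2 x).hasDerivWithinAt
  have hinj : InjOn (fun y : ℝ => y ^ 2) (Ioo s t) := by
    have : StrictMonoOn (fun y : ℝ => y ^ 2) (Ioo s t) := fun x hx y _ hxy =>
      pow_lt_pow_left₀ hxy (hs.trans hx.1.le) two_ne_zero
    exact this.injOn
  have himg := sq_image_Ioo hs hst
  have hgint : IntegrableOn g (Ioo (s ^ 2) (t ^ 2)) := by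
    rw [← intervalIntegrable_iff_integrableOn_Ioo_of_le hpq.le]
    exact II_both hu hv hpq
  have hiff := integrableOn_image_iff_integrableOn_abs_deriv_smul hmeas hder hinj g
  rw [himg] at hiff
  have hint2 : IntegrableOn (fun x => |2 * x| • g (x ^ 2)) (Ioo s t) := hiff.1 hgint
  have heq : EqOn (fun x => |2 * x| • g (x ^ 2))
      (fun r => ((r ^ 2 - s ^ 2 : ℝ) : ℂ) ^ (u - 1) * ((t ^ 2 - r ^ 2 : ℝ) : ℂ) ^ (v - 1)
        * ((2 * r : ℝ) : ℂ)) (Ioo s t) := by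
    intro x hx
    have hx0 : 0 < x := lt_of_le_of_lt hs hx.1
    simp only [hg, Complex.real_smul, abs_of_pos (by positivity : (0:ℝ) < 2 * x)]
    push_cast
    ring
  refine ⟨(hint2.congr_fun heq hmeas : _), ?_⟩
  have hval := integral_image_eq_integral_abs_deriv_smul hmeas hder hinj g
  rw [himg] at hval
  have hL : ∫ x in Ioo (s ^ 2) (t ^ 2), g x
      = ((t ^ 2 - s ^ 2 : ℝ) : ℂ) ^ (u + v - 1) * Complex.betaIntegral u v := by
    rw [← integral_Ioc_eq_integral_Ioo, ← intervalIntegral.integral_of_le hpq.le]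
    exact integral_shifted_beta u v hpq
  rw [← setIntegral_congr_fun hmeas heq, ← hval, hL]

lemma stepC_real {a b : ℝ} (ha : 0 < a) (hb : 0 < b) {s t : ℝ} (hs : 0 ≤ s) (hst : s < t) :
    IntegrableOn (fun r => (r ^ 2 - s ^ 2) ^ (a - 1) * (t ^ 2 - r ^ 2) ^ (b - 1) * (2 * r))
        (Ioo s t) volume ∧
    ∫ r in Ioo s t, (r ^ 2 - s ^ 2) ^ (a - 1) * (t ^ 2 - r ^ 2) ^ (b - 1) * (2 * r)
      = (t ^ 2 - s ^ 2) ^ (a + b - 1) * (Complex.betaIntegral (a : ℂ) (b : ℂ)).re := by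
  obtain ⟨hint, hval⟩ := stepC (u := (a : ℂ)) (v := (b : ℂ)) (by simpa) (by simpa) hs hst
  have heq : EqOn
      (fun r => ((r ^ 2 - s ^ 2 : ℝ) : ℂ) ^ ((a : ℂ) - 1) * ((t ^ 2 - r ^ 2 : ℝ) : ℂ) ^ ((b : ℂ) - 1)
        * ((2 * r : ℝ) : ℂ))
      (fun r => (((r ^ 2 - s ^ 2) ^ (a - 1) * (t ^ 2 - r ^ 2) ^ (b - 1) * (2 * r) : ℝ) : ℂ))
      (Ioo s t) := by
    intro r hr
    have h1 : (0:ℝ) ≤ r ^ 2 - s ^ 2 := by nlinarith [hr.1, hr.2]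
    have h2 : (0:ℝ) ≤ t ^ 2 - r ^ 2 := by nlinarith [hr.1, hr.2]
    simp only [Complex.ofReal_mul]
    rw [Complex.ofReal_cpow h1, Complex.ofReal_cpow h2]
    push_cast
    ring
  have hmeas : MeasurableSet (Ioo s t) := measurableSet_Ioo
  have hint2 : IntegrableOn
      (fun r => (((r ^ 2 - s ^ 2) ^ (a - 1) * (t ^ 2 - r ^ 2) ^ (b - 1) * (2 * r) : ℝ) : ℂ))
      (Ioo s t) := hint.congr_fun heq hmeas
  constructor
  · exact hint2.re.congr (Filter.Eventually.of_forall fun r => by simp)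
  · have hcast : ∫ r in Ioo s t,
        (((r ^ 2 - s ^ 2) ^ (a - 1) * (t ^ 2 - r ^ 2) ^ (b - 1) * (2 * r) : ℝ) : ℂ)
        = ((t ^ 2 - s ^ 2 : ℝ) : ℂ) ^ ((a : ℂ) + (b : ℂ) - 1) * Complex.betaIntegral a b := by
      rw [← setIntegral_congr_fun hmeas heq]; exact hval
    have h3 : (0:ℝ) ≤ t ^ 2 - s ^ 2 := by nlinarith
    have h4 := integral_re hint2
    rw [hcast] at h4
    simp only [RCLike.re_to_complex, Complex.ofReal_re] at h4
    rw [h4, show ((t ^ 2 - s ^ 2 : ℝ) : ℂ) ^ ((a : ℂ) + (b : ℂ) - 1)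
        = (((t ^ 2 - s ^ 2) ^ (a + b - 1) : ℝ) : ℂ) by
      rw [Complex.ofReal_cpow h3]; congr 1; push_cast; ring, Complex.re_ofReal_mul]

end EKaux

open Set EKaux

/-- the semigroup (composition) property of Erdélyi–Kober integrals:
`I^β_{η+α} I^α_η φ = I^{α+β}_η φ`. -/
theorem erdelyi_kober_composition
    (η : ℝ) (hη : -1/2 ≤ η) (α β : ℂ) (hα : 0 < α.re) (hβ : 0 < β.re)
    (φ : ℝ → ℝ) (hφ : Continuous φ) (hφc : HasCompactSupport φ)
    (hsupp : tsupport φ ⊆ Set.Ioi (0 : ℝ))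
    (t : ℝ) (ht : 0 < t) :
    EK β ((η : ℂ) + α) (EK α (η : ℂ) (fun r => (φ r : ℂ))) t
      = EK (α + β) (η : ℂ) (fun r => (φ r : ℂ)) t := by
  -- the weight function
  set ψ : ℝ → ℝ := fun s => s ^ (2 * η + 1) * φ s with hψdef
  have hψcont : Continuous ψ := by
    refine Continuous.mul ?_ hφ
    exact continuous_iff_continuousAt.mpr fun x =>
      Real.continuousAt_rpow_const x _ (Or.inr (by linarith))
  have hψc : HasCompactSupport ψ := hφc.mul_left
  obtain ⟨M, hM⟩ := hψc.exists_bound_of_continuous hψcont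
  set w : ℝ → ℂ := fun s => ((ψ s : ℝ) : ℂ) with hwdef
  have hwcont : Continuous w := Complex.continuous_ofReal.comp hψcont
  have hwbound : ∀ s, ‖w s‖ ≤ M := fun s => by simpa [hwdef] using hM s
  have hM0 : 0 ≤ M := le_trans (norm_nonneg _) (hM 0)
  have hwid : ∀ s : ℝ, 0 ≤ s → (s : ℂ) ^ (2 * (η : ℂ) + 1) * (φ s : ℂ) = w s := by
    intro s hs0
    simp only [hwdef, hψdef, Complex.ofReal_mul]
    rw [Complex.ofReal_cpow hs0]
    congr 2
    push_cast
    ring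
  -- notation
  set B : ℂ := Complex.betaIntegral α β with hBdef
  have hΓα : Complex.Gamma α ≠ 0 := Complex.Gamma_ne_zero_of_re_pos hα
  have hΓβ : Complex.Gamma β ≠ 0 := Complex.Gamma_ne_zero_of_re_pos hβ
  have hΓαβ : Complex.Gamma (α + β) ≠ 0 :=
    Complex.Gamma_ne_zero_of_re_pos (by rw [Complex.add_re]; positivity)
  have hB : B = Complex.Gamma α * Complex.Gamma β / Complex.Gamma (α + β) := by
    rw [eq_div_iff hΓαβ, hBdef, mul_comm]
    exact (Complex.Gamma_mul_Gamma_eq_betaIntegral hα hβ).symm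
  -- the inner EK integral rewritten with weight w
  have hEK_inner : ∀ r : ℝ, 0 < r →
      EK α (η : ℂ) (fun x => (φ x : ℂ)) r
        = (2 * (r : ℂ) ^ (-2 * (α + (η : ℂ))) / Complex.Gamma α) *
            ∫ s in (0:ℝ)..r, ((r ^ 2 - s ^ 2 : ℝ) : ℂ) ^ (α - 1) * w s := by
    intro r hr
    unfold EK
    congr 1
    apply intervalIntegral.integral_congr
    intro s hs
    rw [uIcc_of_le hr.le] at hs
    simp only [mul_assoc]
    rw [hwid s hs.1]
  -- the product measure setup
  set μt : Measure ℝ := volume.restrict (Ioo 0 t) with hμt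
  set F : ℝ → ℝ → ℂ := fun r s =>
    ((t ^ 2 - r ^ 2 : ℝ) : ℂ) ^ (β - 1) * (r : ℂ) *
      (((r ^ 2 - s ^ 2 : ℝ) : ℂ) ^ (α - 1) * w s) with hF
  set K : ℝ → ℝ → ℂ := fun r s => if s < r then F r s else 0 with hK
  -- sections in s, for fixed r
  have hsec_r : ∀ r ∈ Ioo (0:ℝ) t, (∫ s, K r s ∂μt) = ∫ s in Ioo (0:ℝ) r, F r s := by
    intro r hr
    have hind : (fun s => K r s) = Set.indicator (Iio r) (F r) := by
      funext x; by_cases h : x < r <;> simp [hK, Set.indicator_apply, h]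
    have hset : Iio r ∩ Ioo 0 t = Ioo 0 r := by
      ext x
      simp only [mem_inter_iff, mem_Iio, mem_Ioo]
      constructor
      · rintro ⟨h1, h2, _⟩; exact ⟨h2, h1⟩
      · rintro ⟨h1, h2⟩; exact ⟨h2, h1, h2.trans hr.2⟩
    rw [hμt, hind, integral_indicator measurableSet_Iio,
      Measure.restrict_restrict measurableSet_Iio, hset]
  -- sections in r, for fixed s
  have hsec_s_ind : ∀ s ∈ Ioo (0:ℝ) t, (fun r => K r s) = Set.indicator (Ioi s) (fun r => F r s) := by
    intro s _
    funext r; by_cases h : s < r <;> simp [hK, Set.indicator_apply, h]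
  have hIoi_inter : ∀ s ∈ Ioo (0:ℝ) t, Ioi s ∩ Ioo 0 t = Ioo s t := by
    intro s hs
    ext x
    simp only [mem_inter_iff, mem_Ioi, mem_Ioo]
    constructor
    · rintro ⟨h1, _, h3⟩; exact ⟨h1, h3⟩
    · rintro ⟨h1, h2⟩; exact ⟨h1, hs.1.trans h1, h2⟩
  -- integrability of sections in r
  have hFint : ∀ s ∈ Ioo (0:ℝ) t, IntegrableOn (fun r => F r s) (Ioo s t) := by
    intro s hs
    have base := (stepC hα hβ hs.1.le hs.2).1
    have hcm := base.const_mul (w s / 2)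
    refine IntegrableOn.congr_fun hcm (fun r hr => ?_) measurableSet_Ioo
    simp only [hF]
    push_cast
    ring
  have hsec_int : ∀ s ∈ Ioo (0:ℝ) t, Integrable (fun r => K r s) μt := by
    intro s hs
    rw [hsec_s_ind s hs, integrable_indicator_iff measurableSet_Ioi]
    show Integrable _ (μt.restrict (Ioi s))
    rw [hμt, Measure.restrict_restrict measurableSet_Ioi, hIoi_inter s hs]
    exact hFint s hs
  -- evaluation of sections in r (complex)
  have hsec_s : ∀ s ∈ Ioo (0:ℝ) t, (∫ r, K r s ∂μt)
      = B / 2 * (((t ^ 2 - s ^ 2 : ℝ) : ℂ) ^ (α + β - 1) * w s) := by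
    intro s hs
    rw [hμt, hsec_s_ind s hs, integral_indicator measurableSet_Ioi,
      Measure.restrict_restrict measurableSet_Ioi, hIoi_inter s hs]
    have hval := (stepC hα hβ hs.1.le hs.2).2
    have : ∫ r in Ioo s t, F r s
        = w s / 2 * ∫ r in Ioo s t, ((r ^ 2 - s ^ 2 : ℝ) : ℂ) ^ (α - 1)
            * ((t ^ 2 - r ^ 2 : ℝ) : ℂ) ^ (β - 1) * ((2 * r : ℝ) : ℂ) := by
      rw [← MeasureTheory.integral_const_mul _ _]
      refine setIntegral_congr_fun measurableSet_Ioo (fun r hr => ?_)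
      simp only [hF]
      push_cast
      ring
    rw [this, hval, hBdef]
    ring
  -- norm of sections in r
  have hnorm_eval : ∀ s ∈ Ioo (0:ℝ) t, (∫ r, ‖K r s‖ ∂μt)
      = ‖w s‖ / 2 * ((t ^ 2 - s ^ 2) ^ (α.re + β.re - 1)
          * (Complex.betaIntegral (α.re : ℂ) (β.re : ℂ)).re) := by
    intro s hs
    have hnind : (fun r => ‖K r s‖) = Set.indicator (Ioi s) (fun r => ‖F r s‖) := by
      funext r
      rw [show K r s = Set.indicator (Ioi s) (fun r => F r s) r from congrFun (hsec_s_ind s hs) r]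
      exact norm_indicator_eq_indicator_norm _ _
    rw [hμt, hnind, integral_indicator measurableSet_Ioi,
      Measure.restrict_restrict measurableSet_Ioi, hIoi_inter s hs]
    have hreal := (stepC_real hα hβ hs.1.le hs.2).2
    have : ∫ r in Ioo s t, ‖F r s‖
        = ‖w s‖ / 2 * ∫ r in Ioo s t, (r ^ 2 - s ^ 2) ^ (α.re - 1)
            * (t ^ 2 - r ^ 2) ^ (β.re - 1) * (2 * r) := by
      rw [← MeasureTheory.integral_const_mul _ _]
      refine setIntegral_congr_fun measurableSet_Ioo (fun r hr => ?_)
      have h1 : (0:ℝ) < r ^ 2 - s ^ 2 := by nlinarith [hr.1, hr.2, hs.1]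
      have h2 : (0:ℝ) < t ^ 2 - r ^ 2 := by nlinarith [hr.1, hr.2, hs.1]
      have hr0 : (0:ℝ) < r := hs.1.trans hr.1
      simp only [hF, norm_mul, Complex.norm_cpow_eq_rpow_re_of_pos h1,
        Complex.norm_cpow_eq_rpow_re_of_pos h2, Complex.norm_real, Real.norm_eq_abs, abs_of_pos hr0,
        Complex.sub_re, Complex.one_re]
      ring
    rw [this, hreal]
  -- the dominating function is integrable
  have hdom : Integrable (fun s => ‖w s‖ / 2 * ((t ^ 2 - s ^ 2) ^ (α.re + β.re - 1)
      * (Complex.betaIntegral (α.re : ℂ) (β.re : ℂ)).re)) μt := by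
    set Cre : ℝ := (Complex.betaIntegral (α.re : ℂ) (β.re : ℂ)).re with hCre
    set c : ℝ := α.re + β.re - 1 with hc
    have hc1 : (-1:ℝ) < c := by rw [hc]; linarith
    have hbase : IntegrableOn (fun s => (t - s) ^ c * (t + s) ^ c) (Ioo 0 t) := by
      rw [← intervalIntegrable_iff_integrableOn_Ioo_of_le ht.le]
      apply IntervalIntegrable.mul_continuousOn
      · have h0 : IntervalIntegrable (fun x : ℝ => x ^ c) volume 0 t :=
          intervalIntegral.intervalIntegrable_rpow' hc1
        simpa using (h0.comp_sub_left t).symm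
      · intro x hx
        rw [Set.uIcc_of_le ht.le] at hx
        have hca : ContinuousAt (fun s : ℝ => (t + s) ^ c) x :=
          (Real.continuousAt_rpow_const _ _ (Or.inl (by linarith [hx.1]))).comp
            (by fun_prop)
        exact hca.continuousWithinAt
    have hbase2 : IntegrableOn (fun s => (t ^ 2 - s ^ 2) ^ c) (Ioo 0 t) := by
      refine IntegrableOn.congr_fun hbase (fun s hs => ?_) measurableSet_Ioo
      rw [← Real.mul_rpow (by linarith [hs.2]) (by linarith [hs.1])]
      congr 1
      ring
    rw [hμt]
    have hmul := (hbase2.const_mul Cre).bdd_mul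
      ((hwcont.norm.div_const 2).aestronglyMeasurable)
      (c := M / 2) (Filter.Eventually.of_forall fun x => by
        rw [Real.norm_eq_abs, abs_of_nonneg (by positivity)]
        have := hwbound x
        linarith)
    refine hmul.congr (Filter.Eventually.of_forall fun s => ?_)
    simp only
    ring
  -- measurability of K
  have hKmeas : Measurable (Function.uncurry K) := by
    have hFm : Measurable (fun p : ℝ × ℝ => F p.1 p.2) := by
      apply Measurable.mul
      apply Measurable.mul
      · exact (Complex.measurable_ofReal.comp
          (measurable_const.sub (measurable_fst.pow_const 2))).pow measurable_const
      · exact Complex.measurable_ofReal.comp measurable_fst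
      · exact ((Complex.measurable_ofReal.comp
          ((measurable_fst.pow_const 2).sub (measurable_snd.pow_const 2))).pow
            measurable_const).mul (hwcont.measurable.comp measurable_snd)
    have hset : MeasurableSet {p : ℝ × ℝ | p.2 < p.1} :=
      measurableSet_lt measurable_snd measurable_fst
    exact Measurable.ite hset hFm measurable_const
  -- integrability of K on the product
  have hKint : Integrable (Function.uncurry K) (μt.prod μt) := by
    rw [MeasureTheory.integrable_prod_iff' hKmeas.aestronglyMeasurable]
    constructor
    · exact (ae_restrict_iff' measurableSet_Ioo).mpr
        (Filter.Eventually.of_forall fun s hs => hsec_int s hs)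
    · exact hdom.congr ((ae_restrict_iff' measurableSet_Ioo).mpr
        (Filter.Eventually.of_forall fun s hs => (hnorm_eval s hs).symm))
  have hswap := MeasureTheory.integral_integral_swap hKint
  -- now the main computation
  show (2 * (t : ℂ) ^ (-2 * (β + ((η : ℂ) + α))) / Complex.Gamma β) *
      (∫ r in (0:ℝ)..t, ((t ^ 2 - r ^ 2 : ℝ) : ℂ) ^ (β - 1) * (r : ℂ) ^ (2 * ((η : ℂ) + α) + 1) *
        EK α (η : ℂ) (fun x => (φ x : ℂ)) r)
    = (2 * (t : ℂ) ^ (-2 * ((α + β) + (η : ℂ))) / Complex.Gamma (α + β)) *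
      (∫ s in (0:ℝ)..t, ((t ^ 2 - s ^ 2 : ℝ) : ℂ) ^ (α + β - 1) * (s : ℂ) ^ (2 * (η : ℂ) + 1) * (φ s : ℂ))
  have hstep1 : (∫ r in (0:ℝ)..t,
        ((t ^ 2 - r ^ 2 : ℝ) : ℂ) ^ (β - 1) * (r : ℂ) ^ (2 * ((η : ℂ) + α) + 1) *
          EK α (η : ℂ) (fun x => (φ x : ℂ)) r)
      = (2 / Complex.Gamma α) * ∫ r, (∫ s, K r s ∂μt) ∂μt := by
    rw [intervalIntegral.integral_of_le ht.le, integral_Ioc_eq_integral_Ioo, ← MeasureTheory.integral_const_mul _ _]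
    refine setIntegral_congr_fun measurableSet_Ioo fun r hr => ?_
    rw [hEK_inner r hr.1, hsec_r r hr]
    have hrne : (r : ℂ) ≠ 0 := Complex.ofReal_ne_zero.mpr hr.1.ne'
    have hcp : (r : ℂ) ^ (2 * ((η : ℂ) + α) + 1) * (r : ℂ) ^ (-2 * (α + (η : ℂ))) = (r : ℂ) := by
      rw [← Complex.cpow_add _ _ hrne,
        show 2 * ((η : ℂ) + α) + 1 + -2 * (α + (η : ℂ)) = 1 by ring, Complex.cpow_one]
    have hIr : (∫ s in Ioo (0:ℝ) r, F r s)
        = ((t ^ 2 - r ^ 2 : ℝ) : ℂ) ^ (β - 1) * (r : ℂ) *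
            ∫ s in (0:ℝ)..r, ((r ^ 2 - s ^ 2 : ℝ) : ℂ) ^ (α - 1) * w s := by
      rw [intervalIntegral.integral_of_le hr.1.le, integral_Ioc_eq_integral_Ioo,
        ← MeasureTheory.integral_const_mul _ _]
    rw [hIr]
    set T := ((t ^ 2 - r ^ 2 : ℝ) : ℂ)
    set I := ∫ s in (0:ℝ)..r, ((r ^ 2 - s ^ 2 : ℝ) : ℂ) ^ (α - 1) * w s
    calc T ^ (β - 1) * (r : ℂ) ^ (2 * ((η : ℂ) + α) + 1) *
          ((2 * (r : ℂ) ^ (-2 * (α + (η : ℂ))) / Complex.Gamma α) * I)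
        = (2 / Complex.Gamma α) *
            (T ^ (β - 1) * ((r : ℂ) ^ (2 * ((η : ℂ) + α) + 1) * (r : ℂ) ^ (-2 * (α + (η : ℂ)))) * I) := by
          ring
      _ = (2 / Complex.Gamma α) * (T ^ (β - 1) * (r : ℂ) * I) := by rw [hcp]
  have hstep3 : (∫ s, (∫ r, K r s ∂μt) ∂μt)
      = B / 2 * ∫ s in (0:ℝ)..t, ((t ^ 2 - s ^ 2 : ℝ) : ℂ) ^ (α + β - 1) * w s := by
    rw [intervalIntegral.integral_of_le ht.le, integral_Ioc_eq_integral_Ioo, ← MeasureTheory.integral_const_mul _ _]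
    refine setIntegral_congr_fun measurableSet_Ioo fun s hs => ?_
    rw [hsec_s s hs]
  have hfinal_integrand : (∫ s in (0:ℝ)..t,
        ((t ^ 2 - s ^ 2 : ℝ) : ℂ) ^ (α + β - 1) * (s : ℂ) ^ (2 * (η : ℂ) + 1) * (φ s : ℂ))
      = ∫ s in (0:ℝ)..t, ((t ^ 2 - s ^ 2 : ℝ) : ℂ) ^ (α + β - 1) * w s := by
    apply intervalIntegral.integral_congr
    intro s hs
    rw [uIcc_of_le ht.le] at hs
    simp only [mul_assoc]
    rw [hwid s hs.1]
  rw [hstep1, hswap, hstep3, hfinal_integrand]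
  have hexp : (-2 * (β + ((η : ℂ) + α))) = (-2 * (α + β + (η : ℂ))) := by ring
  rw [hexp, hB]
  field_simp
end

section
/- Let f₀ : [0,∞) → ℝ be continuous with f₀(r) = 0 for all r ≥ 1, and define F₀(t) = (1/(2t)) ∫_{t−1}^{1} f₀(r) r dr for t ∈ (1,2). Then for every r ∈ (0,1), f₀(r) = −(2/r) · [d/dt (t F₀(t))]|_{t = 1+r}; that is, the radial profile f₀ is recovered from the spherical mean data F₀(t) known only for t ∈ (1,2). -/
open MeasureTheory

/-- recovery of the radial profile `f₀` from the spherical mean data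
`F₀(t)`, known only for `t ∈ (1,2)`. -/
theorem radial_inversion_large_t
    (f₀ : ℝ → ℝ) (hf₀ : ContinuousOn f₀ (Set.Ici 0))
    (hvan : ∀ r : ℝ, 1 ≤ r → f₀ r = 0)
    (F₀ : ℝ → ℝ)
    (hF₀ : ∀ t ∈ Set.Ioo (1 : ℝ) 2,
      F₀ t = (1 / (2 * t)) * ∫ r in (t - 1)..1, f₀ r * r)
    (r : ℝ) (hr : r ∈ Set.Ioo (0 : ℝ) 1) :
    f₀ r = -(2 / r) * deriv (fun t => t * F₀ t) (1 + r) := by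
  obtain ⟨hr0, hr1⟩ := hr
  have ha : (1 + r) ∈ Set.Ioo (1:ℝ) 2 := ⟨by linarith, by linarith⟩
  have hcont : ContinuousOn (fun x => f₀ x * x) (Set.Ioi 0) :=
    (hf₀.mono (Set.Ioi_subset_Ici le_rfl)).mul continuousOn_id
  have hint : IntervalIntegrable (fun x => f₀ x * x) volume r 1 := by
    apply ContinuousOn.intervalIntegrable
    apply hcont.mono
    rw [Set.uIcc_of_le hr1.le]
    intro x hx
    exact lt_of_lt_of_le hr0 hx.1
  have hmeas : StronglyMeasurableAtFilter (fun x => f₀ x * x) (nhds r) :=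
    (ContinuousOn.stronglyMeasurableAtFilter isOpen_Ioi hcont) r hr0
  have hca : ContinuousAt (fun x => f₀ x * x) r :=
    hcont.continuousAt (Ioi_mem_nhds hr0)
  have hderiv : HasDerivAt (fun u => ∫ x in u..1, f₀ x * x) (-(f₀ r * r)) r :=
    intervalIntegral.integral_hasDerivAt_left hint hmeas hca
  have h1 : HasDerivAt (fun t : ℝ => t - 1) 1 (1 + r) := by
    simpa using (hasDerivAt_id (1 + r)).sub_const 1
  have hd2 : HasDerivAt (fun t => ∫ x in (t-1)..1, f₀ x * x) (-(f₀ r * r)) (1 + r) := by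
    have hderiv' : HasDerivAt (fun u => ∫ x in u..1, f₀ x * x) (-(f₀ r * r)) (1 + r - 1) := by
      rw [show (1:ℝ) + r - 1 = r by ring]; exact hderiv
    have := hderiv'.comp (1 + r) h1
    rw [mul_one] at this; exact this
  have heq : (fun t => t * F₀ t) =ᶠ[nhds (1 + r)]
      fun t => (1/2) * ∫ x in (t-1)..1, f₀ x * x := by
    filter_upwards [Ioo_mem_nhds ha.1 ha.2] with t ht
    rw [hF₀ t ht]
    have ht0 : t ≠ 0 := by nlinarith [ht.1]
    field_simp
  have hd3 : HasDerivAt (fun t => t * F₀ t) ((1/2) * -(f₀ r * r)) (1 + r) :=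
    (hd2.const_mul (1/2)).congr_of_eventuallyEq heq
  rw [hd3.deriv]
  field_simp
end
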